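/- Let M be a complex n×n matrix whose characteristic polynomial has n distinct roots λ₁,…,λ_n in ℂ. Then exp(M) = Σ_{i=1}^{n} exp(λ_i) · M_i, where M_i = Π_{j≠i} (λ_i − λ_j)⁻¹ (M − λ_j·id_n) and id_n is the n×n identity matrix (the product is taken in the commutative ring ℂ[M]). -/

import Mathlib

open Matrix Polynomial Finset

lemma pow_mulVec_eigen {n : ℕ} {M : Matrix (Fin n) (Fin n) ℂ} {μ : ℂ} {v : Fin n → ℂ}
    (h : M *ᵥ v = μ • v) (k : ℕ) : (M ^ k) *ᵥ v = μ ^ k • v := by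
  induction k with
  | zero => simp
  | succ k ih =>
      rw [pow_succ, pow_succ, ← Matrix.mulVec_mulVec, h, Matrix.mulVec_smul, ih,
        smul_smul, mul_comm]

lemma aeval_mulVec_eigen {n : ℕ} {M : Matrix (Fin n) (Fin n) ℂ} {μ : ℂ} {v : Fin n → ℂ}
    (h : M *ᵥ v = μ • v) (p : Polynomial ℂ) :
    (Polynomial.aeval M p) *ᵥ v = p.eval μ • v := by
  induction p using Polynomial.induction_on' with
  | add p q hp hq => rw [map_add, Matrix.add_mulVec, hp, hq, eval_add, add_smul]
  | monomial k c =>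
      rw [aeval_monomial, eval_monomial, ← smul_eq_mul (a := c), ← Algebra.smul_def,
        Matrix.smul_mulVec, pow_mulVec_eigen h, smul_smul, smul_eq_mul]

lemma exp_mulVec_eigen {n : ℕ} {M : Matrix (Fin n) (Fin n) ℂ} {μ : ℂ} {v : Fin n → ℂ}
    (h : M *ᵥ v = μ • v) :
    (NormedSpace.exp M) *ᵥ v = Complex.exp μ • v := by
  letI : SeminormedRing (Matrix (Fin n) (Fin n) ℂ) := Matrix.linftyOpSemiNormedRing
  letI : NormedRing (Matrix (Fin n) (Fin n) ℂ) := Matrix.linftyOpNormedRing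
  letI : NormedAlgebra ℂ (Matrix (Fin n) (Fin n) ℂ) := Matrix.linftyOpNormedAlgebra
  let L : Matrix (Fin n) (Fin n) ℂ →ₗ[ℂ] (Fin n → ℂ) :=
    { toFun := fun A => A *ᵥ v
      map_add' := fun A B => Matrix.add_mulVec A B v
      map_smul' := fun c A => Matrix.smul_mulVec c A v }
  have hs : Summable (fun k : ℕ => ((k.factorial : ℂ))⁻¹ • M ^ k) :=
    NormedSpace.expSeries_summable' M
  have key : (NormedSpace.exp M) *ᵥ v
      = ∑' k : ℕ, (((k.factorial : ℂ))⁻¹ * μ ^ k) • v := by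
    rw [NormedSpace.exp_eq_tsum ℂ]
    rw [show (∑' k : ℕ, ((k.factorial : ℂ))⁻¹ • M ^ k) *ᵥ v
        = L.toContinuousLinearMap (∑' k : ℕ, ((k.factorial : ℂ))⁻¹ • M ^ k) from rfl]
    rw [L.toContinuousLinearMap.map_tsum hs]
    refine tsum_congr fun k => ?_
    show (((k.factorial : ℂ))⁻¹ • M ^ k) *ᵥ v = _
    rw [Matrix.smul_mulVec, pow_mulVec_eigen h, smul_smul]
  have hsμ : Summable (fun k : ℕ => ((k.factorial : ℂ))⁻¹ * μ ^ k) := by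
    simpa [smul_eq_mul] using NormedSpace.expSeries_summable' (𝕂 := ℂ) μ
  rw [key, hsμ.tsum_smul_const]
  congr 1
  rw [Complex.exp_eq_exp_ℂ, NormedSpace.exp_eq_tsum ℂ]
  simp [smul_eq_mul]

lemma sum_mulVec' {n : ℕ} {ι : Type*} (s : Finset ι) (A : ι → Matrix (Fin n) (Fin n) ℂ)
    (x : Fin n → ℂ) : (∑ i ∈ s, A i) *ᵥ x = ∑ i ∈ s, A i *ᵥ x :=
  map_sum (AddMonoidHom.mk' (fun B => B *ᵥ x) (fun B C => Matrix.add_mulVec B C x)) A s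

/-- **Sylvester's formula for the matrix exponential.**
If `M` is a complex `n × n` matrix whose characteristic polynomial has `n` distinct roots
`λ₁, …, λ_n` in `ℂ`, then `exp(M) = ∑ i, exp(λ i) • M i`, where
`M i = ∏_{j ≠ i} (λ i - λ j)⁻¹ • (M - λ j • 1)` — the matrix product is formed in the
commutative ring `ℂ[M]`, i.e. as the evaluation at `M` of the polynomial
`∏_{j ≠ i} (X - C (λ j))`. -/
theorem sylvester_formula_exp
    (n : ℕ) (M : Matrix (Fin n) (Fin n) ℂ) (lam : Fin n → ℂ)
    (hroots : M.charpoly.roots = Multiset.map lam Finset.univ.val)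
    (hdistinct : Function.Injective lam) :
    NormedSpace.exp M =
      ∑ i : Fin n, Complex.exp (lam i) •
        ((∏ j ∈ Finset.univ.erase i, (lam i - lam j)⁻¹) •
          (Polynomial.aeval M (∏ j ∈ Finset.univ.erase i, (X - C (lam j))))) := by
  classical
  rcases Nat.eq_zero_or_pos n with hn | hn
  · subst hn; exact Subsingleton.elim _ _
  haveI : NeZero n := ⟨hn.ne'⟩
  have hroot : ∀ i, (M.charpoly).IsRoot (lam i) := by
    intro i
    apply Polynomial.isRoot_of_mem_roots
    rw [hroots]
    exact Multiset.mem_map.mpr ⟨i, Finset.mem_univ_val i, rfl⟩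
  have hev : ∀ i : Fin n, ∃ w : Fin n → ℂ, w ≠ 0 ∧ M *ᵥ w = lam i • w := by
    intro i
    have hsc : (lam i) • (1 : Matrix (Fin n) (Fin n) ℂ) = scalar (Fin n) (lam i) := by
      rw [Matrix.scalar_apply]
      ext a b
      by_cases hab : a = b <;>
        simp [Matrix.diagonal_apply, hab, Matrix.one_apply]
    have hdet : (M - lam i • 1).det = 0 := by
      have h1 := hroot i
      rw [Polynomial.IsRoot, Matrix.charpoly, eval_det, matPolyEquiv_charmatrix,
        Polynomial.eval_sub, Polynomial.eval_X, Polynomial.eval_C] at h1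
      have h2 : M - lam i • 1 = -((scalar (Fin n) (lam i)) - M) := by
        rw [neg_sub, hsc]
      rw [h2, Matrix.det_neg, h1, mul_zero]
    obtain ⟨w, hw0, hw⟩ := (Matrix.exists_mulVec_eq_zero_iff).mpr hdet
    refine ⟨w, hw0, ?_⟩
    rwa [Matrix.sub_mulVec, Matrix.smul_mulVec, Matrix.one_mulVec, sub_eq_zero] at hw
  choose v hv0 hMv using hev
  have hli : LinearIndependent ℂ v := by
    apply Module.End.eigenvectors_linearIndependent' (Matrix.mulVecLin M) lam hdistinct v
    intro i
    exact ⟨Module.End.mem_eigenspace_iff.mpr (by simpa using hMv i), hv0 i⟩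
  let b : Module.Basis (Fin n) ℂ (Fin n → ℂ) :=
    basisOfLinearIndependentOfCardEqFinrank hli (by simp)
  have hb : ∀ i, b i = v i := fun i =>
    congrFun (coe_basisOfLinearIndependentOfCardEqFinrank hli (by simp)) i
  apply Matrix.toLin'.injective
  apply b.ext
  intro k
  rw [hb]
  show (NormedSpace.exp M) *ᵥ (v k) = _
  rw [exp_mulVec_eigen (hMv k)]
  show _ = (∑ i : Fin n, Complex.exp (lam i) •
        ((∏ j ∈ Finset.univ.erase i, (lam i - lam j)⁻¹) •
          (Polynomial.aeval M (∏ j ∈ Finset.univ.erase i, (X - C (lam j)))))) *ᵥ (v k)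
  rw [sum_mulVec']
  have hterm : ∀ i : Fin n,
      (Complex.exp (lam i) • ((∏ j ∈ Finset.univ.erase i, (lam i - lam j)⁻¹) •
          (Polynomial.aeval M (∏ j ∈ Finset.univ.erase i, (X - C (lam j)))))) *ᵥ (v k)
      = if i = k then Complex.exp (lam k) • v k else 0 := by
    intro i
    rw [Matrix.smul_mulVec, Matrix.smul_mulVec,
      aeval_mulVec_eigen (hMv k), Polynomial.eval_prod]
    simp only [Polynomial.eval_sub, Polynomial.eval_X, Polynomial.eval_C]
    by_cases hik : i = k
    · subst hik
      rw [if_pos rfl, smul_smul, smul_smul, mul_assoc, ← Finset.prod_mul_distrib]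
      have hone : ∀ j ∈ Finset.univ.erase i, (lam i - lam j)⁻¹ * (lam i - lam j) = 1 := by
        intro j hj
        have hij : lam i ≠ lam j := fun hh =>
          (Finset.mem_erase.mp hj).1 (hdistinct hh.symm)
        exact inv_mul_cancel₀ (sub_ne_zero.mpr hij)
      rw [Finset.prod_congr rfl hone, Finset.prod_const_one, mul_one]
    · rw [if_neg hik]
      have hz : (∏ j ∈ Finset.univ.erase i, (lam k - lam j)) = 0 :=
        Finset.prod_eq_zero (Finset.mem_erase.mpr ⟨fun h => hik h.symm, Finset.mem_univ k⟩)
          (by simp)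
      rw [hz, zero_smul, smul_zero, smul_zero]
  rw [Finset.sum_congr rfl (fun i _ => hterm i), Finset.sum_ite_eq']
  simp
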